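/- For a planar convex body D of constant width and a point v on the boundary of D, pdist(v, D) = diam(D). -/

import Mathlib

open MeasureTheory Real Set

noncomputable section

abbrev E2 := EuclideanSpace ℝ (Fin 2)

def uvec (θ : ℝ) : E2 := !₂[Real.cos θ, Real.sin θ]
def rotvec (θ : ℝ) : E2 := !₂[Real.sin θ, -Real.cos θ]

def IsConvexBody (C : Set E2) : Prop :=
  IsCompact C ∧ Convex ℝ C ∧ (interior C).Nonempty

/-- `n θ` is the touching point of the supporting line of `C` with inward normal `uvec θ`. -/
def IsNormalSel (C : Set E2) (n : ℝ → E2) : Prop :=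
  ∀ θ, n θ ∈ C ∧ ∀ y ∈ C, (inner ℝ (n θ) (uvec θ) : ℝ) ≤ inner ℝ y (uvec θ)

/-- pseudodistance computed from normal selections of the two bodies. -/
def pdistN (n₁ n₂ : ℝ → E2) : ℝ :=
  (1/2) * ∫ θ in (0:ℝ)..(2*π), |(inner ℝ (n₁ θ - n₂ θ) (rotvec θ) : ℝ)|

/-- distance from a point to the normal line of a body with normal selection `n`. -/
def pdistP (v : E2) (n : ℝ → E2) : ℝ :=
  (1/2) * ∫ θ in (0:ℝ)..(2*π), |(inner ℝ (v - n θ) (rotvec θ) : ℝ)|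

def hsup (C : Set E2) (θ : ℝ) : ℝ := sSup ((fun x => (inner ℝ x (rotvec θ) : ℝ)) '' C)
def hinf (C : Set E2) (θ : ℝ) : ℝ := sInf ((fun x => (inner ℝ x (rotvec θ) : ℝ)) '' C)

def pperN (C : Set E2) (n : ℝ → E2) : ℝ :=
  (1/2) * ∫ θ in (0:ℝ)..(2*π),
    (|hsup C θ - (inner ℝ (n θ) (rotvec θ) : ℝ)| + |hinf C θ - (inner ℝ (n θ) (rotvec θ) : ℝ)|)

def ConstantWidth (D : Set E2) (w : ℝ) : Prop :=
  ∀ d : E2, ‖d‖ = 1 →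
    sSup ((fun x => (inner ℝ x d : ℝ)) '' D) - sInf ((fun x => (inner ℝ x d : ℝ)) '' D) = w

end

noncomputable section

/-! ### Auxiliary lemmas -/

lemma inner_E2 (x y : E2) : (inner ℝ x y : ℝ) = x 0 * y 0 + x 1 * y 1 := by
  simp [PiLp.inner_apply, Fin.sum_univ_two, RCLike.inner_apply, mul_comm]

lemma norm_sq_E2 (x : E2) : ‖x‖^2 = x 0 ^2 + x 1 ^2 := by
  rw [← real_inner_self_eq_norm_sq, inner_E2]; ring

lemma norm_uvec (θ : ℝ) : ‖uvec θ‖ = 1 := by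
  have h : ‖uvec θ‖^2 = 1 := by
    rw [norm_sq_E2]
    show Real.cos θ ^ 2 + Real.sin θ ^2 = 1
    rw [cos_sq_add_sin_sq]
  have h2 : (‖uvec θ‖ - 1) * (‖uvec θ‖ + 1) = 0 := by nlinarith
  rcases mul_eq_zero.1 h2 with h3 | h3
  · linarith
  · nlinarith [norm_nonneg (uvec θ)]

lemma norm_rotvec (θ : ℝ) : ‖rotvec θ‖ = 1 := by
  have h : ‖rotvec θ‖^2 = 1 := by
    rw [norm_sq_E2]
    show Real.sin θ ^ 2 + (-Real.cos θ) ^2 = 1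
    rw [neg_pow]; simp [sin_sq_add_cos_sq]
  have h2 : (‖rotvec θ‖ - 1) * (‖rotvec θ‖ + 1) = 0 := by nlinarith
  rcases mul_eq_zero.1 h2 with h3 | h3
  · linarith
  · nlinarith [norm_nonneg (rotvec θ)]

lemma uvec_decomp (a t : ℝ) : uvec a = Real.cos (t-a) • uvec t + Real.sin (t-a) • rotvec t := by
  ext i
  fin_cases i
  · show Real.cos a = _
    simp [uvec, rotvec, Real.cos_sub, Real.sin_sub]
    linear_combination (-Real.cos a) * (sin_sq_add_cos_sq t)
  · show Real.sin a = _
    simp [uvec, rotvec, Real.cos_sub, Real.sin_sub]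
    linear_combination (-Real.sin a) * (sin_sq_add_cos_sq t)

lemma uvec_add_pi (θ : ℝ) : uvec (θ + π) = -uvec θ := by
  ext i; fin_cases i <;> simp [uvec, Real.cos_add, Real.sin_add]

lemma rotvec_add_pi (θ : ℝ) : rotvec (θ + π) = -rotvec θ := by
  ext i; fin_cases i <;> simp [rotvec, Real.cos_add, Real.sin_add]

lemma parseval_E2 (x : E2) (t : ℝ) :
    ‖x‖^2 = (inner ℝ x (uvec t) : ℝ)^2 + (inner ℝ x (rotvec t) : ℝ)^2 := by
  rw [norm_sq_E2, inner_E2, inner_E2]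
  show x 0^2 + x 1^2 = (x 0 * Real.cos t + x 1 * Real.sin t)^2 +
    (x 0 * Real.sin t + x 1 * (-Real.cos t))^2
  linear_combination (-(x 0^2 + x 1^2)) * (sin_sq_add_cos_sq t)

lemma inner_uvec_rotvec (θ : ℝ) : (inner ℝ (uvec θ) (rotvec θ) : ℝ) = 0 := by
  rw [inner_E2]
  show Real.cos θ * Real.sin θ + Real.sin θ * (-Real.cos θ) = 0
  ring

lemma inner_uvec_self (θ : ℝ) : (inner ℝ (uvec θ) (uvec θ) : ℝ) = 1 := by
  rw [real_inner_self_eq_norm_sq, norm_uvec]; norm_num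

lemma inner_rotvec_uvec (θ : ℝ) : (inner ℝ (rotvec θ) (uvec θ) : ℝ) = 0 := by
  rw [inner_E2]
  show Real.sin θ * Real.cos θ + (-Real.cos θ) * Real.sin θ = 0
  ring

lemma inner_rotvec_self (θ : ℝ) : (inner ℝ (rotvec θ) (rotvec θ) : ℝ) = 1 := by
  rw [real_inner_self_eq_norm_sq, norm_rotvec]; norm_num

/-- Cauchy–Schwarz equality case. -/
lemma eq_smul_of_inner_eq {x d : E2} {w : ℝ} (hd : ‖d‖ = 1)
    (h1 : ‖x‖ ≤ w) (h2 : (inner ℝ x d : ℝ) = w) : x = w • d := by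
  have hxw : ‖x‖ = w := by
    have := real_inner_le_norm x d
    rw [hd, mul_one, h2] at this
    linarith
  have : ‖x - w • d‖^2 = 0 := by
    have hw0 : (0:ℝ) ≤ w := hxw ▸ norm_nonneg x
    rw [norm_sub_sq_real, real_inner_smul_right, h2, norm_smul, hd, hxw, mul_one,
      Real.norm_eq_abs, abs_of_nonneg hw0]
    ring
  have := pow_eq_zero_iff (n := 2) (by norm_num) |>.1 this
  rw [norm_eq_zero, sub_eq_zero] at this
  exact this

lemma hasDerivAt_inner_uvec (c : E2) (t : ℝ) :
    HasDerivAt (fun s => (inner ℝ c (uvec s) : ℝ)) (-(inner ℝ c (rotvec t) : ℝ)) t := by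
  have h : (fun s => (inner ℝ c (uvec s) : ℝ)) =
      (fun s => c 0 * Real.cos s + c 1 * Real.sin s) := by
    funext s; rw [inner_E2]; rfl
  rw [h, inner_E2]
  show HasDerivAt _ (-(c 0 * Real.sin t + c 1 * (-Real.cos t))) t
  have := ((Real.hasDerivAt_cos t).const_mul (c 0)).add ((Real.hasDerivAt_sin t).const_mul (c 1))
  refine this.congr_deriv ?_
  ring

lemma continuous_uvec : Continuous uvec := by
  have h : uvec = fun θ => Real.cos θ • (EuclideanSpace.single 0 (1:ℝ)) +
      Real.sin θ • (EuclideanSpace.single 1 (1:ℝ)) := by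
    funext θ; ext i; fin_cases i <;> simp [uvec, EuclideanSpace.single_apply]
  rw [h]
  exact (Real.continuous_cos.smul continuous_const).add (Real.continuous_sin.smul continuous_const)

lemma continuous_rotvec : Continuous rotvec := by
  have h : rotvec = fun θ => Real.sin θ • (EuclideanSpace.single 0 (1:ℝ)) +
      (-Real.cos θ) • (EuclideanSpace.single 1 (1:ℝ)) := by
    funext θ; ext i; fin_cases i <;> simp [rotvec, EuclideanSpace.single_apply]
  rw [h]
  exact (Real.continuous_sin.smul continuous_const).add
    ((Real.continuous_cos.neg).smul continuous_const)

set_option maxHeartbeats 1600000 in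
theorem pdist_of_boundary_point (D : Set E2) (hD : IsConvexBody D)
    (w : ℝ) (hw : ConstantWidth D w)
    (n : ℝ → E2) (hn : IsNormalSel D n)
    (v : E2) (hv : v ∈ frontier D) :
    ∫ θ in (0:ℝ)..π, |(inner ℝ (v - n θ) (rotvec θ) : ℝ)| = Metric.diam D := by
  obtain ⟨hcomp, hconv, hint⟩ := hD
  have hDne : D.Nonempty := hint.mono interior_subset
  have hcont : ∀ d : E2, Continuous fun x : E2 => (inner ℝ x d : ℝ) :=
    fun d => continuous_id.inner continuous_const
  have hbddA : ∀ d : E2, BddAbove ((fun x => (inner ℝ x d : ℝ)) '' D) :=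
    fun d => (hcomp.image (hcont d)).bddAbove
  have hbddB : ∀ d : E2, BddBelow ((fun x => (inner ℝ x d : ℝ)) '' D) :=
    fun d => (hcomp.image (hcont d)).bddBelow
  have hneI : ∀ d : E2, ((fun x => (inner ℝ x d : ℝ)) '' D).Nonempty := fun d => hDne.image _
  -- the infimum is attained at `n θ`
  have hInf : ∀ θ, (inner ℝ (n θ) (uvec θ) : ℝ) = sInf ((fun x => (inner ℝ x (uvec θ) : ℝ)) '' D) := by
    intro θ
    apply le_antisymm
    · exact le_csInf (hneI _) (by rintro b ⟨y, hy, rfl⟩; exact (hn θ).2 y hy)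
    · exact csInf_le (hbddB _) ⟨n θ, (hn θ).1, rfl⟩
  -- `n (θ + π)` is a maximizer in direction `uvec θ`
  have hmaxA : ∀ θ, ∀ y ∈ D, (inner ℝ y (uvec θ) : ℝ) ≤ inner ℝ (n (θ+π)) (uvec θ) := by
    intro θ y hy
    have h := (hn (θ+π)).2 y hy
    rw [uvec_add_pi, inner_neg_right, inner_neg_right] at h
    linarith
  have hSupA : ∀ θ,
      (inner ℝ (n (θ+π)) (uvec θ) : ℝ) = sSup ((fun x => (inner ℝ x (uvec θ) : ℝ)) '' D) := by
    intro θ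
    apply le_antisymm
    · exact le_csSup (hbddA _) ⟨_, (hn (θ+π)).1, rfl⟩
    · exact csSup_le (hneI _) (by rintro b ⟨y, hy, rfl⟩; exact hmaxA θ y hy)
  have hwθ : ∀ θ, (inner ℝ (n (θ+π)) (uvec θ) : ℝ) - inner ℝ (n θ) (uvec θ) = w := by
    intro θ; rw [hInf, hSupA]; exact hw (uvec θ) (norm_uvec θ)
  have hw0 : 0 ≤ w := by
    have h := hwθ 0
    have h2 := (hn 0).2 (n (0+π)) (hn (0+π)).1
    linarith
  -- diameter bound
  have hL1 : ∀ x ∈ D, ∀ y ∈ D, ‖x - y‖ ≤ w := by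
    intro x hx y hy
    rcases eq_or_ne x y with rfl | hne
    · simpa using hw0
    · have hxy : (0:ℝ) < ‖x - y‖ := by
        rw [norm_pos_iff]; exact sub_ne_zero.2 hne
      set d : E2 := ‖x - y‖⁻¹ • (x - y) with hd_def
      have hd : ‖d‖ = 1 := by
        rw [hd_def, norm_smul, Real.norm_eq_abs, abs_of_nonneg (by positivity)]
        field_simp
      have hxd : (inner ℝ x d : ℝ) - inner ℝ y d = ‖x - y‖ := by
        rw [← inner_sub_left, hd_def, real_inner_smul_right, real_inner_self_eq_norm_sq]
        field_simp
      have h1 : (inner ℝ x d : ℝ) ≤ sSup ((fun z => (inner ℝ z d : ℝ)) '' D) :=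
        le_csSup (hbddA d) ⟨x, hx, rfl⟩
      have h2 : sInf ((fun z => (inner ℝ z d : ℝ)) '' D) ≤ (inner ℝ y d : ℝ) :=
        csInf_le (hbddB d) ⟨y, hy, rfl⟩
      have := hw d hd
      linarith
  -- antipodal point
  have hant : ∀ θ, n (θ+π) = n θ + w • uvec θ := by
    intro θ
    have h1 : ‖n (θ+π) - n θ‖ ≤ w := hL1 _ (hn (θ+π)).1 _ (hn θ).1
    have h2 : (inner ℝ (n (θ+π) - n θ) (uvec θ) : ℝ) = w := by
      rw [inner_sub_left]; exact hwθ θ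
    have := eq_smul_of_inner_eq (norm_uvec θ) h1 h2
    rw [sub_eq_iff_eq_add] at this
    rw [this]; abel
  -- support bounds
  have hsupp : ∀ θ, ∀ y ∈ D, 0 ≤ (inner ℝ (y - n θ) (uvec θ) : ℝ) ∧
      (inner ℝ (y - n θ) (uvec θ) : ℝ) ≤ w := by
    intro θ y hy
    constructor
    · rw [inner_sub_left]; have := (hn θ).2 y hy; linarith
    · rw [inner_sub_left]
      have := hmaxA θ y hy
      have := hwθ θ
      linarith
  -- positive width
  have hwpos : 0 < w := by
    obtain ⟨x₀, hx₀⟩ := hint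
    obtain ⟨ε, hε, hball⟩ := Metric.isOpen_iff.1 isOpen_interior x₀ hx₀
    have hplus : x₀ + (ε/2) • uvec 0 ∈ D := by
      apply interior_subset
      apply hball
      rw [Metric.mem_ball, dist_eq_norm]
      simp only [add_sub_cancel_left]
      rw [norm_smul, Real.norm_eq_abs, abs_of_nonneg (by linarith), norm_uvec]
      linarith
    have hminus : x₀ - (ε/2) • uvec 0 ∈ D := by
      apply interior_subset
      apply hball
      rw [Metric.mem_ball, dist_eq_norm]
      simp only [sub_sub_cancel_left, norm_neg]
      rw [norm_smul, Real.norm_eq_abs, abs_of_nonneg (by linarith), norm_uvec]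
      linarith
    have h1 : (inner ℝ (x₀ + (ε/2) • uvec 0) (uvec 0) : ℝ) ≤
        sSup ((fun z => (inner ℝ z (uvec 0) : ℝ)) '' D) := le_csSup (hbddA _) ⟨_, hplus, rfl⟩
    have h2 : sInf ((fun z => (inner ℝ z (uvec 0) : ℝ)) '' D) ≤
        (inner ℝ (x₀ - (ε/2) • uvec 0) (uvec 0) : ℝ) := csInf_le (hbddB _) ⟨_, hminus, rfl⟩
    have h3 : (inner ℝ (x₀ + (ε/2) • uvec 0) (uvec 0) : ℝ) -
        (inner ℝ (x₀ - (ε/2) • uvec 0) (uvec 0) : ℝ) = ε := by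
      rw [inner_add_left, inner_sub_left, real_inner_smul_left,
        inner_uvec_self]
      ring
    have := hw (uvec 0) (norm_uvec 0)
    linarith
  -- key quantitative (Hölder) bound on the normal selection
  have hK : ∀ a t : ℝ, 0 ≤ t - a → t - a ≤ π/4 → ‖n t - n a‖ ≤ 2*w*(t-a) := by
    intro a t h0 h4
    set x := n t - n a with hx_def
    have hA : (inner ℝ x (uvec t) : ℝ) ≤ 0 := by
      rw [hx_def, inner_sub_left]
      have := (hn t).2 (n a) (hn a).1
      linarith
    have hcos : 0 ≤ Real.cos (t - a) :=
      Real.cos_nonneg_of_mem_Icc ⟨by linarith [Real.pi_pos], by linarith [Real.pi_pos]⟩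
    have hsin : 0 ≤ Real.sin (t - a) :=
      Real.sin_nonneg_of_nonneg_of_le_pi h0 (by linarith [Real.pi_pos])
    have hsinle : Real.sin (t - a) ≤ t - a := Real.sin_le h0
    -- ‖x‖² ≤ 2 w ⟪x, uvec a⟫
    have key1 : ‖x‖^2 ≤ 2*w*(inner ℝ x (uvec a) : ℝ) := by
      have hmem : n a + w • uvec a ∈ D := by rw [← hant a]; exact (hn (a+π)).1
      have h5 : ‖n t - (n a + w • uvec a)‖ ≤ w := hL1 _ (hn t).1 _ hmem
      have h6 : n t - (n a + w • uvec a) = x - w • uvec a := by rw [hx_def]; abel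
      rw [h6] at h5
      have h7 : ‖x - w • uvec a‖^2 ≤ w^2 := by
        have := norm_nonneg (x - w • uvec a); nlinarith
      rw [norm_sub_sq_real, real_inner_smul_right, norm_smul, Real.norm_eq_abs,
        abs_of_nonneg hw0, norm_uvec, mul_one] at h7
      nlinarith
    -- ⟪x, uvec a⟫ ≤ sin(t-a) ‖x‖
    have key2 : (inner ℝ x (uvec a) : ℝ) ≤ Real.sin (t-a) * ‖x‖ := by
      rw [uvec_decomp a t, inner_add_right, real_inner_smul_right, real_inner_smul_right]
      have h8 : (inner ℝ x (rotvec t) : ℝ) ≤ ‖x‖ := by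
        have := real_inner_le_norm x (rotvec t)
        rwa [norm_rotvec, mul_one] at this
      nlinarith [mul_nonneg hcos (neg_nonneg.2 hA), mul_le_mul_of_nonneg_left h8 hsin]
    rcases eq_or_lt_of_le (norm_nonneg x) with hz | hz
    · rw [← hz]; positivity
    · nlinarith [mul_le_mul_of_nonneg_left hsinle (mul_nonneg (by linarith : (0:ℝ) ≤ 2*w)
        (norm_nonneg x))]
  -- continuity of the normal selection
  have ncont : Continuous n := by
    rw [Metric.continuous_iff]
    intro b ε hε
    refine ⟨min (π/4) (ε/(2*w+1)), lt_min (by positivity) (by positivity), fun a hab => ?_⟩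
    have hd : dist (n a) (n b) ≤ 2*w*|a - b| := by
      rcases le_total a b with h | h
      · rw [dist_eq_norm, ← norm_neg, neg_sub]
        have := hK a b (by linarith) (by
          have := lt_of_lt_of_le hab (min_le_left _ _)
          rw [Real.dist_eq, abs_of_nonpos (by linarith)] at this
          linarith)
        rw [abs_of_nonpos (by linarith)]
        linarith
      · rw [dist_eq_norm]
        have := hK b a (by linarith) (by
          have := lt_of_lt_of_le hab (min_le_left _ _)
          rw [Real.dist_eq, abs_of_nonneg (by linarith)] at this
          linarith)
        rw [abs_of_nonneg (by linarith)]
        linarith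
    have hab2 : |a - b| < ε/(2*w+1) := by
      have := lt_of_lt_of_le hab (min_le_right _ _)
      rwa [Real.dist_eq] at this
    calc dist (n a) (n b) ≤ 2*w*|a - b| := hd
      _ ≤ 2*w*(ε/(2*w+1)) := by
          apply mul_le_mul_of_nonneg_left (le_of_lt hab2) (by linarith)
      _ < ε := by
          rw [div_eq_inv_mul, ← mul_assoc]
          have h1 : 2*w*(2*w+1)⁻¹ < 1 := by
            rw [mul_inv_lt_iff₀ (by linarith)]
            linarith
          nlinarith
  -- the support function along the normal and its "derivative"
  set F : ℝ → ℝ := fun θ => (inner ℝ (n θ) (uvec θ) : ℝ) with hF_def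
  set p : ℝ → ℝ := fun θ => (inner ℝ (n θ) (rotvec θ) : ℝ) with hp_def
  have pcont : Continuous p := ncont.inner continuous_rotvec
  have pint : ∀ a b : ℝ, IntervalIntegrable p volume a b :=
    fun a b => pcont.intervalIntegrable a b
  have hFTCc : ∀ (c : E2) (a b : ℝ),
      (∫ t in a..b, -(inner ℝ c (rotvec t) : ℝ)) = (inner ℝ c (uvec b) : ℝ) - inner ℝ c (uvec a) :=
    fun c a b => intervalIntegral.integral_eq_sub_of_hasDerivAt
      (fun t _ => hasDerivAt_inner_uvec c t)
      (((continuous_const.inner continuous_rotvec).neg).intervalIntegrable a b)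
  have hquad : ∀ a b : ℝ, (∫ t in a..b, 2*w*(t-a)) = w*(b-a)^2 := by
    intro a b
    have hG : ∀ t : ℝ, HasDerivAt (fun s => w*(s-a)^2) (2*w*(t-a)) t := by
      intro t
      have h : HasDerivAt (fun s : ℝ => (s-a)^2) ((2:ℕ)*(t-a)^1*1) t :=
        ((hasDerivAt_id' (x := t)).sub_const a).pow 2
      have h' := h.const_mul w
      refine h'.congr_deriv ?_
      push_cast
      ring
    rw [intervalIntegral.integral_eq_sub_of_hasDerivAt (fun t _ => hG t)
      ((continuous_const.mul (continuous_sub_right a)).intervalIntegrable a b)]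
    simp
  have hquad2 : ∀ a b : ℝ, (∫ t in a..b, -(2*w*(b-t))) = -(w*(b-a)^2) := by
    intro a b
    have hG : ∀ t : ℝ, HasDerivAt (fun s => w*(b-s)^2) (-(2*w*(b-t))) t := by
      intro t
      have h : HasDerivAt (fun s : ℝ => (b-s)^2) ((2:ℕ)*(b-t)^1*(-1)) t := by
        have h0 : HasDerivAt (fun s : ℝ => b - s) (-1) t := by
          simpa using (hasDerivAt_id' (x := t)).const_sub b
        exact h0.pow 2
      have h' := h.const_mul w
      refine h'.congr_deriv ?_
      push_cast
      ring
    rw [intervalIntegral.integral_eq_sub_of_hasDerivAt (fun t _ => hG t)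
      (((continuous_const.mul (continuous_sub_left b)).neg).intervalIntegrable a b)]
    simp
  -- local almost-FTC estimate
  have hlocal : ∀ a b : ℝ, a ≤ b → b - a ≤ π/4 →
      |F b - F a + ∫ t in a..b, p t| ≤ w*(b-a)^2 := by
    intro a b hab h4
    have hintsub1 : IntervalIntegrable (fun t => -(inner ℝ (n a) (rotvec t) : ℝ)) volume a b :=
      ((continuous_const.inner continuous_rotvec).neg).intervalIntegrable a b
    have hintsub2 : IntervalIntegrable (fun t => -(inner ℝ (n b) (rotvec t) : ℝ)) volume a b :=
      ((continuous_const.inner continuous_rotvec).neg).intervalIntegrable a b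
    have hup : F b - F a + (∫ t in a..b, p t) ≤ w*(b-a)^2 := by
      have h1 : F b ≤ (inner ℝ (n a) (uvec b) : ℝ) := (hn b).2 (n a) (hn a).1
      have h3 : F b - F a ≤ ∫ t in a..b, -(inner ℝ (n a) (rotvec t) : ℝ) := by
        rw [hFTCc (n a) a b]
        have : F a = (inner ℝ (n a) (uvec a) : ℝ) := rfl
        linarith
      have h5 : (∫ t in a..b, p t) + (∫ t in a..b, -(inner ℝ (n a) (rotvec t) : ℝ))
          ≤ w*(b-a)^2 := by
        rw [← intervalIntegral.integral_add (pint a b) hintsub1]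
        rw [← hquad a b]
        apply intervalIntegral.integral_mono_on hab
          ((pcont.add ((continuous_const.inner continuous_rotvec).neg)).intervalIntegrable a b)
          ((continuous_const.mul (continuous_sub_right a)).intervalIntegrable a b)
        intro t ht
        have hK' := hK a t (by linarith [ht.1]) (by linarith [ht.2])
        have hin : (inner ℝ (n t - n a) (rotvec t) : ℝ) ≤ ‖n t - n a‖ := by
          have := real_inner_le_norm (n t - n a) (rotvec t)
          rwa [norm_rotvec, mul_one] at this
        have : p t + -(inner ℝ (n a) (rotvec t) : ℝ) = (inner ℝ (n t - n a) (rotvec t) : ℝ) := by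
          rw [inner_sub_left]; ring
        show p t + -(inner ℝ (n a) (rotvec t) : ℝ) ≤ 2*w*(t-a)
        rw [this]
        linarith
      linarith
    have hdown : -(w*(b-a)^2) ≤ F b - F a + (∫ t in a..b, p t) := by
      have h1 : F a ≤ (inner ℝ (n b) (uvec a) : ℝ) := (hn a).2 (n b) (hn b).1
      have h3 : (∫ t in a..b, -(inner ℝ (n b) (rotvec t) : ℝ)) ≤ F b - F a := by
        rw [hFTCc (n b) a b]
        have : F b = (inner ℝ (n b) (uvec b) : ℝ) := rfl
        linarith
      have h5 : -(w*(b-a)^2) ≤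
          (∫ t in a..b, p t) + (∫ t in a..b, -(inner ℝ (n b) (rotvec t) : ℝ)) := by
        rw [← intervalIntegral.integral_add (pint a b) hintsub2]
        rw [← hquad2 a b]
        apply intervalIntegral.integral_mono_on hab
          (((continuous_const.mul (continuous_sub_left b)).neg).intervalIntegrable a b)
          ((pcont.add ((continuous_const.inner continuous_rotvec).neg)).intervalIntegrable a b)
        intro t ht
        have hK' := hK t b (by linarith [ht.2]) (by linarith [ht.1])
        have hin : (inner ℝ (n b - n t) (rotvec t) : ℝ) ≤ ‖n b - n t‖ := by
          have := real_inner_le_norm (n b - n t) (rotvec t)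
          rwa [norm_rotvec, mul_one] at this
        have heq : p t + -(inner ℝ (n b) (rotvec t) : ℝ) = -(inner ℝ (n b - n t) (rotvec t) : ℝ) := by
          rw [inner_sub_left]; ring
        show -(2*w*(b-t)) ≤ p t + -(inner ℝ (n b) (rotvec t) : ℝ)
        rw [heq]
        linarith
      linarith
    rw [abs_le]
    exact ⟨hdown, hup⟩
  -- global FTC identity over intervals of length π
  have hglobal : ∀ a : ℝ, F (a+π) - F a + (∫ t in a..a+π, p t) = 0 := by
    intro a
    set X := F (a+π) - F a + (∫ t in a..a+π, p t) with hX
    have hbound : ∀ N : ℕ, 4 ≤ N → |X| ≤ w * π^2 / N := by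
      intro N hN
      have hNpos : (0:ℝ) < (N:ℝ) := by
        have : (0:ℕ) < N := by omega
        exact_mod_cast this
      set pts : ℕ → ℝ := fun i => a + i * (π/N) with hpts
      have hstep : ∀ i : ℕ, pts (i+1) - pts i = π/N := by
        intro i; simp only [hpts]; push_cast; ring
      have htel : ∑ i ∈ Finset.range N, (F (pts (i+1)) - F (pts i)) = F (pts N) - F (pts 0) :=
        Finset.sum_range_sub (fun i => F (pts i)) N
      have hsum : ∑ i ∈ Finset.range N, (∫ t in pts i..pts (i+1), p t)
          = ∫ t in (pts 0)..(pts N), p t :=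
        intervalIntegral.sum_integral_adjacent_intervals (fun k _ => pint _ _)
      have hpts0 : pts 0 = a := by simp [hpts]
      have hptsN : pts N = a + π := by
        simp only [hpts]
        field_simp
      have hXsum : X = ∑ i ∈ Finset.range N,
          ((F (pts (i+1)) - F (pts i)) + ∫ t in pts i..pts (i+1), p t) := by
        rw [Finset.sum_add_distrib, htel, hsum, hpts0, hptsN]
      rw [hXsum]
      calc |∑ i ∈ Finset.range N,
          ((F (pts (i+1)) - F (pts i)) + ∫ t in pts i..pts (i+1), p t)|
          ≤ ∑ i ∈ Finset.range N,
            |(F (pts (i+1)) - F (pts i)) + ∫ t in pts i..pts (i+1), p t| :=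
            Finset.abs_sum_le_sum_abs _ _
        _ ≤ ∑ i ∈ Finset.range N, w*(π/N)^2 := by
            apply Finset.sum_le_sum
            intro i _
            have h1 : pts i ≤ pts (i+1) := by
              rw [← sub_nonneg, hstep i]
              positivity
            have h2 : pts (i+1) - pts i ≤ π/4 := by
              rw [hstep i]
              exact div_le_div_of_nonneg_left Real.pi_pos.le (by norm_num)
                (by exact_mod_cast hN)
            have := hlocal (pts i) (pts (i+1)) h1 h2
            rwa [hstep i] at this
        _ = N * (w*(π/N)^2) := by rw [Finset.sum_const, Finset.card_range, nsmul_eq_mul]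
        _ = w * π^2 / N := by field_simp
    by_contra hX0
    have habs : 0 < |X| := abs_pos.2 hX0
    obtain ⟨N, hNgt⟩ := exists_nat_gt (max 4 (w*π^2 / |X|))
    have hN4 : 4 ≤ N := by
      have h4 : (4:ℝ) ≤ (N:ℝ) := le_of_lt (lt_of_le_of_lt (le_max_left _ _) hNgt)
      exact_mod_cast h4
    have hNpos : (0:ℝ) < (N:ℝ) := by
      have : (0:ℕ) < N := by omega
      exact_mod_cast this
    have h1 := hbound N hN4
    have h2 : w*π^2 / N < |X| := by
      have hNb : w*π^2/|X| < (N:ℝ) := lt_of_le_of_lt (le_max_right _ _) hNgt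
      rw [div_lt_iff₀ habs] at hNb
      rw [div_lt_iff₀ hNpos]
      nlinarith
    linarith
  -- supporting direction at the boundary point v
  have hvD : v ∈ D := by
    have := frontier_subset_closure (s := D) hv
    rwa [hcomp.isClosed.closure_eq] at this
  have hvni : v ∉ interior D := by
    have hfr : frontier D = closure D \ interior D := rfl
    rw [hfr] at hv
    exact hv.2
  obtain ⟨f, hf⟩ := geometric_hahn_banach_open_point (hconv.interior) isOpen_interior hvni
  obtain ⟨x₀, hx₀⟩ := hint
  have hfle : ∀ y ∈ D, f y ≤ f v := by
    intro y hy
    have hseq : ∀ k : ℕ, f (y + (1/(k+1) : ℝ) • (x₀ - y)) < f v := by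
      intro k
      apply hf
      apply hconv.add_smul_sub_mem_interior hy hx₀
      constructor
      · positivity
      · rw [div_le_one (by positivity)]
        linarith [Nat.cast_nonneg (α := ℝ) k]
    have htend : Filter.Tendsto (fun k : ℕ => f (y + (1/(k+1) : ℝ) • (x₀ - y)))
        Filter.atTop (nhds (f y)) := by
      have h1 : Filter.Tendsto (fun k : ℕ => (1/(k+1) : ℝ)) Filter.atTop (nhds 0) :=
        tendsto_one_div_add_atTop_nhds_zero_nat
      have h2 : Filter.Tendsto (fun k : ℕ => y + (1/(k+1) : ℝ) • (x₀ - y))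
          Filter.atTop (nhds (y + (0:ℝ) • (x₀ - y))) :=
        Filter.Tendsto.const_add _ (h1.smul_const _)
      rw [zero_smul, add_zero] at h2
      exact (f.continuous.tendsto y).comp h2
    exact le_of_tendsto htend (Filter.Eventually.of_forall (fun k => (hseq k).le))
  set z : E2 := (InnerProductSpace.toDual ℝ E2).symm f with hz_def
  have hz : ∀ x : E2, (inner ℝ z x : ℝ) = f x := fun x =>
    InnerProductSpace.toDual_symm_apply
  have hzne : z ≠ 0 := by
    intro h0
    have h1 := hf x₀ hx₀
    have h2 : f x₀ = 0 := by rw [← hz, h0, inner_zero_left]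
    have h3 : f v = 0 := by rw [← hz, h0, inner_zero_left]
    rw [h2, h3] at h1
    exact lt_irrefl _ h1
  set d : E2 := (-(‖z‖⁻¹)) • z with hd_def
  have hdn : ‖d‖ = 1 := by
    rw [hd_def, norm_smul, Real.norm_eq_abs, abs_neg, abs_of_nonneg (by positivity)]
    field_simp [norm_ne_zero_iff.2 hzne]
  have hdmin : ∀ y ∈ D, (inner ℝ v d : ℝ) ≤ inner ℝ y d := by
    intro y hy
    rw [hd_def, real_inner_smul_right, real_inner_smul_right]
    have h1 : (inner ℝ y z : ℝ) ≤ inner ℝ v z := by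
      have hy' := hfle y hy
      rw [← hz, ← hz] at hy'
      calc (inner ℝ y z : ℝ) = inner ℝ z y := real_inner_comm z y
        _ ≤ inner ℝ z v := hy'
        _ = inner ℝ v z := real_inner_comm v z
    have h2 : (0:ℝ) ≤ ‖z‖⁻¹ := by positivity
    nlinarith
  -- find the angle θ₀ with uvec θ₀ = d
  have hd_sq : d 0 ^2 + d 1 ^2 = 1 := by
    have := norm_sq_E2 d
    rw [hdn] at this
    linarith [this.symm]
  have hd0le : -1 ≤ d 0 ∧ d 0 ≤ 1 := by
    constructor <;> nlinarith [sq_nonneg (d 1)]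
  obtain ⟨θ₀, hθ₀⟩ : ∃ θ₀, uvec θ₀ = d := by
    rcases le_or_gt 0 (d 1) with hd1 | hd1
    · refine ⟨Real.arccos (d 0), ?_⟩
      ext i
      fin_cases i
      · show Real.cos (Real.arccos (d 0)) = d 0
        exact Real.cos_arccos hd0le.1 hd0le.2
      · show Real.sin (Real.arccos (d 0)) = d 1
        rw [Real.sin_arccos]
        rw [show 1 - d 0^2 = d 1^2 by linarith, Real.sqrt_sq_eq_abs, abs_of_nonneg hd1]
    · refine ⟨-Real.arccos (d 0), ?_⟩
      ext i
      fin_cases i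
      · show Real.cos (-Real.arccos (d 0)) = d 0
        rw [Real.cos_neg]
        exact Real.cos_arccos hd0le.1 hd0le.2
      · show Real.sin (-Real.arccos (d 0)) = d 1
        rw [Real.sin_neg, Real.sin_arccos]
        rw [show 1 - d 0^2 = d 1^2 by linarith, Real.sqrt_sq_eq_abs, abs_of_nonpos hd1.le]
        ring
  have hvmin : ∀ y ∈ D, (inner ℝ v (uvec θ₀) : ℝ) ≤ inner ℝ y (uvec θ₀) := by
    rw [hθ₀]; exact hdmin
  -- v attains the infimum in direction θ₀, and its antipode is n (θ₀ + π)
  have hvinf : (inner ℝ v (uvec θ₀) : ℝ) = inner ℝ (n θ₀) (uvec θ₀) :=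
    le_antisymm (hvmin _ (hn θ₀).1) ((hn θ₀).2 v hvD)
  have hvant : n (θ₀ + π) = v + w • uvec θ₀ := by
    have h1 : ‖n (θ₀+π) - v‖ ≤ w := hL1 _ (hn (θ₀+π)).1 _ hvD
    have h2 : (inner ℝ (n (θ₀+π) - v) (uvec θ₀) : ℝ) = w := by
      rw [inner_sub_left, hvinf]
      exact hwθ θ₀
    have := eq_smul_of_inner_eq (norm_uvec θ₀) h1 h2
    rw [sub_eq_iff_eq_add] at this
    rw [this]; abel
  -- sign lemma: on [θ₀, θ₀+π] the signed distance is nonpositive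
  have hsign : ∀ t : ℝ, θ₀ ≤ t → t ≤ θ₀ + π → (inner ℝ (v - n t) (rotvec t) : ℝ) ≤ 0 := by
    intro t ht1 ht2
    set α := t - θ₀ with hα
    set c := Real.cos α with hc_def
    set s := Real.sin α with hs_def
    have hs0 : 0 ≤ s := Real.sin_nonneg_of_nonneg_of_le_pi (by linarith) (by linarith)
    have hpyth : c^2 + s^2 = 1 := by
      rw [hc_def, hs_def]; exact cos_sq_add_sin_sq α
    set A := (inner ℝ (v - n t) (uvec t) : ℝ) with hA_def
    set B := (inner ℝ (v - n t) (rotvec t) : ℝ) with hB_def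
    have hA0 : 0 ≤ A := (hsupp t v hvD).1
    have hAw : A ≤ w := (hsupp t v hvD).2
    have hu0 : uvec θ₀ = c • uvec t + s • rotvec t := by
      rw [hc_def, hs_def, hα]
      exact uvec_decomp θ₀ t
    have h1' : c*A + s*B ≤ 0 := by
      have hvm := hvmin (n t) (hn t).1
      have hxu0 : (inner ℝ (v - n t) (uvec θ₀) : ℝ) = c*A + s*B := by
        rw [hu0, inner_add_right, real_inner_smul_right, real_inner_smul_right]
      have : (inner ℝ (v - n t) (uvec θ₀) : ℝ) ≤ 0 := by
        rw [inner_sub_left]; linarith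
      linarith
    have hnt : n (t+π) ∈ D := (hn (t+π)).1
    have hiu0u : (inner ℝ (uvec θ₀) (uvec t) : ℝ) = c := by
      rw [hu0, inner_add_left, real_inner_smul_left, real_inner_smul_left,
        inner_uvec_self, inner_rotvec_uvec]
      ring
    have hiu0r : (inner ℝ (uvec θ₀) (rotvec t) : ℝ) = s := by
      rw [hu0, inner_add_left, real_inner_smul_left, real_inner_smul_left,
        inner_uvec_rotvec, inner_rotvec_self]
      ring
    -- constraint from dist(v, n(t+π)) ≤ w
    have h3 : (A - w)^2 + B^2 ≤ w^2 := by
      have hd3 : ‖(v - n t) - w • uvec t‖ ≤ w := by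
        have heq : v - n (t+π) = (v - n t) - w • uvec t := by rw [hant t]; abel
        rw [← heq]
        exact hL1 v hvD _ hnt
      have compU : (inner ℝ ((v - n t) - w • uvec t) (uvec t) : ℝ) = A - w := by
        rw [inner_sub_left, real_inner_smul_left, inner_uvec_self, hA_def]
        ring
      have compR : (inner ℝ ((v - n t) - w • uvec t) (rotvec t) : ℝ) = B := by
        rw [inner_sub_left, real_inner_smul_left, inner_uvec_rotvec, hB_def]
        ring
      have hp := parseval_E2 ((v - n t) - w • uvec t) t
      rw [compU, compR] at hp
      have hnn := norm_nonneg ((v - n t) - w • uvec t)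
      nlinarith
    -- constraint from dist(v + w uvec θ₀, n(t+π)) ≤ w
    have h2q : (A + w*c - w)^2 + (B + w*s)^2 ≤ w^2 := by
      have hv'mem : v + w • uvec θ₀ ∈ D := by rw [← hvant]; exact (hn (θ₀+π)).1
      have hd2 : ‖(v - n t) + (w • uvec θ₀ - w • uvec t)‖ ≤ w := by
        have heq : (v + w • uvec θ₀) - n (t+π) = (v - n t) + (w • uvec θ₀ - w • uvec t) := by
          rw [hant t]; abel
        rw [← heq]
        exact hL1 _ hv'mem _ hnt
      have compU : (inner ℝ ((v - n t) + (w • uvec θ₀ - w • uvec t)) (uvec t) : ℝ)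
          = A + w*c - w := by
        rw [inner_add_left, inner_sub_left, inner_sub_left, real_inner_smul_left,
          real_inner_smul_left, inner_uvec_self, hiu0u, hA_def, inner_sub_left]
        ring
      have compR : (inner ℝ ((v - n t) + (w • uvec θ₀ - w • uvec t)) (rotvec t) : ℝ)
          = B + w*s := by
        rw [inner_add_left, inner_sub_left, inner_sub_left, real_inner_smul_left,
          real_inner_smul_left, inner_uvec_rotvec, hiu0r, hB_def, inner_sub_left]
        ring
      have hp := parseval_E2 ((v - n t) + (w • uvec θ₀ - w • uvec t)) t
      rw [compU, compR] at hp
      have hnn := norm_nonneg ((v - n t) + (w • uvec θ₀ - w • uvec t))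
      nlinarith
    by_cases hc : 0 ≤ c
    · rcases eq_or_lt_of_le hs0 with hs | hs
      · have hc1 : c = 1 := by nlinarith [sq_nonneg (c-1), sq_nonneg (c+1)]
        have h1'' := h1'
        rw [hc1, ← hs] at h1''
        have hA : A = 0 := by linarith
        have h3' := h3
        rw [hA] at h3'
        nlinarith [sq_nonneg B]
      · nlinarith [mul_nonneg hc hA0]
    · push_neg at hc
      have hwc : w*c < 0 := mul_neg_of_pos_of_neg hwpos hc
      have hkey : 0 ≤ (w - A) * (w - A - 2*w*c) := by
        apply mul_nonneg
        · linarith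
        · linarith
      have hpw : w^2*c^2 + w^2*s^2 = w^2 := by linear_combination w^2 * hpyth
      nlinarith [mul_nonneg hw0 hs0, sq_nonneg (B + w*s), h2q, hkey, hpw]
  -- final assembly
  have gcont : Continuous (fun θ => (inner ℝ (v - n θ) (rotvec θ) : ℝ)) :=
    (continuous_const.sub ncont).inner continuous_rotvec
  have gper : ∀ θ : ℝ, (inner ℝ (v - n (θ+π)) (rotvec (θ+π)) : ℝ)
      = -(inner ℝ (v - n θ) (rotvec θ) : ℝ) := by
    intro θ
    rw [hant θ, rotvec_add_pi, inner_neg_right]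
    have heq : v - (n θ + w • uvec θ) = (v - n θ) - w • uvec θ := by abel
    rw [heq, inner_sub_left, real_inner_smul_left, inner_uvec_rotvec]
    ring
  have hper : Function.Periodic (fun θ => |(inner ℝ (v - n θ) (rotvec θ) : ℝ)|) π := by
    intro θ
    simp only
    rw [gper θ, abs_neg]
  have hshift : (∫ θ in (0:ℝ)..π, |(inner ℝ (v - n θ) (rotvec θ) : ℝ)|)
      = ∫ θ in θ₀..(θ₀+π), |(inner ℝ (v - n θ) (rotvec θ) : ℝ)| := by
    have h := hper.intervalIntegral_add_eq 0 θ₀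
    simpa using h
  have heqneg : (∫ θ in θ₀..(θ₀+π), |(inner ℝ (v - n θ) (rotvec θ) : ℝ)|)
      = ∫ θ in θ₀..(θ₀+π), -(inner ℝ (v - n θ) (rotvec θ) : ℝ) := by
    apply intervalIntegral.integral_congr
    intro t ht
    rw [uIcc_of_le (by linarith [Real.pi_pos])] at ht
    exact abs_of_nonpos (hsign t ht.1 ht.2)
  have hneg : (∫ θ in θ₀..(θ₀+π), -(inner ℝ (v - n θ) (rotvec θ) : ℝ))
      = -∫ θ in θ₀..(θ₀+π), (inner ℝ (v - n θ) (rotvec θ) : ℝ) :=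
    intervalIntegral.integral_neg
  have hsplit : (∫ θ in θ₀..(θ₀+π), (inner ℝ (v - n θ) (rotvec θ) : ℝ))
      = (∫ θ in θ₀..(θ₀+π), (inner ℝ v (rotvec θ) : ℝ)) - ∫ θ in θ₀..(θ₀+π), p θ := by
    rw [← intervalIntegral.integral_sub
      ((continuous_const.inner continuous_rotvec).intervalIntegrable _ _) (pint _ _)]
    apply intervalIntegral.integral_congr
    intro t _
    show (inner ℝ (v - n t) (rotvec t) : ℝ) = (inner ℝ v (rotvec t) : ℝ) - p t
    rw [inner_sub_left]
  have hInt1 : (∫ θ in θ₀..(θ₀+π), (inner ℝ v (rotvec θ) : ℝ)) = 2 * inner ℝ v (uvec θ₀) := by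
    have h := hFTCc v θ₀ (θ₀+π)
    rw [uvec_add_pi, inner_neg_right] at h
    have h2 : (∫ θ in θ₀..(θ₀+π), -(inner ℝ v (rotvec θ) : ℝ))
        = -∫ θ in θ₀..(θ₀+π), (inner ℝ v (rotvec θ) : ℝ) := intervalIntegral.integral_neg
    rw [h2] at h
    linarith
  have hIntp : (∫ θ in θ₀..(θ₀+π), p θ) = F θ₀ - F (θ₀+π) := by
    have := hglobal θ₀
    linarith
  have hFpi : F (θ₀+π) = -(inner ℝ (n θ₀) (uvec θ₀) : ℝ) - w := by
    show (inner ℝ (n (θ₀+π)) (uvec (θ₀+π)) : ℝ) = _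
    rw [hant θ₀, uvec_add_pi, inner_neg_right, inner_add_left, real_inner_smul_left,
      inner_uvec_self]
    ring
  have hvu : (inner ℝ v (uvec θ₀) : ℝ) = F θ₀ := hvinf
  have hFθ₀ : F θ₀ = (inner ℝ (n θ₀) (uvec θ₀) : ℝ) := rfl
  have hdiam : Metric.diam D = w := by
    apply le_antisymm
    · apply Metric.diam_le_of_forall_dist_le hw0
      intro x hx y hy
      rw [dist_eq_norm]
      exact hL1 x hx y hy
    · have hdist : dist (n (0+π)) (n 0) = w := by
        rw [dist_eq_norm, hant 0, add_sub_cancel_left, norm_smul, Real.norm_eq_abs,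
          abs_of_nonneg hw0, norm_uvec, mul_one]
      rw [← hdist]
      exact Metric.dist_le_diam_of_mem hcomp.isBounded (hn (0+π)).1 (hn 0).1
  rw [hdiam, hshift, heqneg, hneg, hsplit, hInt1, hIntp, hvu, hFpi]
  ring

end
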